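/- For all a, b > 0 with a ≠ b, the strict inequality (2/π)·A(a,b) + (1 - 2/π)·H(a,b) < P(a,b) < (5/6)·A(a,b) + (1/6)·H(a,b) holds; moreover, these constants are sharp: the left inequality holds for a coefficient α in place of 2/π for all such a, b if and only if α ≤ 2/π, and the right with β in place of 5/6 if and only if β ≥ 5/6. -/

import Mathlib

open Real

noncomputable def Amean (a b : ℝ) : ℝ := (a + b) / 2
noncomputable def Gmean (a b : ℝ) : ℝ := Real.sqrt (a * b)
noncomputable def Hmean (a b : ℝ) : ℝ := 2 * a * b / (a + b)
noncomputable def Cmean (a b : ℝ) : ℝ := (a ^ 2 + b ^ 2) / (a + b)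
noncomputable def Cbar (a b : ℝ) : ℝ := 2 * (a ^ 2 + a * b + b ^ 2) / (3 * (a + b))
noncomputable def Smean (a b : ℝ) : ℝ := Real.sqrt ((a ^ 2 + b ^ 2) / 2)
noncomputable def Pmean (a b : ℝ) : ℝ := (a - b) / (2 * Real.arcsin ((a - b) / (a + b)))
noncomputable def Tmean (a b : ℝ) : ℝ := (a - b) / (2 * Real.arctan ((a - b) / (a + b)))

open Filter Topology


lemma sin_ge_cubic (s : ℝ) (hs : 0 ≤ s) : s - s^3/6 ≤ Real.sin s := by
  have key : ∀ t : ℝ, HasDerivAt (fun u => Real.sin u - (u - u^3/6))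
      (Real.cos t - (1 - t^2/2)) t := by
    intro t
    have h1 : HasDerivAt (fun u : ℝ => u - u^3/6) (1 - t^2/2) t := by
      have := ((hasDerivAt_pow 3 t).div_const 6)
      have h2 := (hasDerivAt_id t).sub this
      exact h2.congr_deriv (by norm_num; ring)
    exact (Real.hasDerivAt_sin t).sub h1
  have mono : MonotoneOn (fun u => Real.sin u - (u - u^3/6)) (Set.Ici 0) := by
    apply monotoneOn_of_deriv_nonneg (convex_Ici 0)
    · exact (Continuous.continuousOn (by continuity))
    · intro t ht
      exact (key t).differentiableAt.differentiableWithinAt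
    · intro t ht
      rw [(key t).deriv]
      have := Real.one_sub_sq_div_two_le_cos (x := t)
      linarith
  have := mono (Set.self_mem_Ici) (Set.mem_Ici.mpr hs) hs
  simpa using this

lemma sin_le_quintic (s : ℝ) (hs : 0 ≤ s) : Real.sin s ≤ s - s^3/6 + s^5/120 := by
  have key : ∀ t : ℝ, HasDerivAt (fun u => (u - u^3/6 + u^5/120) - Real.sin u)
      ((1 - t^2/2 + t^4/24) - Real.cos t) t := by
    intro t
    have h1 : HasDerivAt (fun u : ℝ => u - u^3/6 + u^5/120) (1 - t^2/2 + t^4/24) t := by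
      have h3 := ((hasDerivAt_pow 3 t).div_const 6)
      have h5 := ((hasDerivAt_pow 5 t).div_const 120)
      have h2 := ((hasDerivAt_id t).sub h3).add h5
      exact h2.congr_deriv (by norm_num; ring)
    exact h1.sub (Real.hasDerivAt_sin t)
  have cosle : ∀ t : ℝ, 0 ≤ t → Real.cos t ≤ 1 - t^2/2 + t^4/24 := by
    intro t ht
    have key2 : ∀ u : ℝ, HasDerivAt (fun v => (1 - v^2/2 + v^4/24) - Real.cos v)
        ((-u + u^3/6) + Real.sin u) u := by
      intro u
      have h2 := ((hasDerivAt_pow 2 u).div_const 2)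
      have h4 := ((hasDerivAt_pow 4 u).div_const 24)
      have h1 : HasDerivAt (fun v : ℝ => 1 - v^2/2 + v^4/24) (-u + u^3/6) u := by
        have := ((hasDerivAt_const u (1:ℝ)).sub h2).add h4
        exact this.congr_deriv (by norm_num; ring)
      have := h1.sub (Real.hasDerivAt_cos u)
      exact this.congr_deriv (by ring)
    have mono : MonotoneOn (fun v => (1 - v^2/2 + v^4/24) - Real.cos v) (Set.Ici 0) := by
      apply monotoneOn_of_deriv_nonneg (convex_Ici 0)
      · exact (Continuous.continuousOn (by continuity))
      · intro u hu; exact (key2 u).differentiableAt.differentiableWithinAt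
      · intro u hu
        rw [(key2 u).deriv]
        rw [interior_Ici] at hu
        have := sin_ge_cubic u (le_of_lt hu)
        linarith
    have := mono Set.self_mem_Ici (Set.mem_Ici.mpr ht) ht
    simp only [Real.cos_zero] at this
    norm_num at this
    linarith
  have mono : MonotoneOn (fun u => (u - u^3/6 + u^5/120) - Real.sin u) (Set.Ici 0) := by
    apply monotoneOn_of_deriv_nonneg (convex_Ici 0)
    · exact (Continuous.continuousOn (by continuity))
    · intro t ht; exact (key t).differentiableAt.differentiableWithinAt
    · intro t ht
      rw [(key t).deriv]
      rw [interior_Ici] at ht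
      have := cosle t (le_of_lt ht)
      linarith
  have := mono Set.self_mem_Ici (Set.mem_Ici.mpr hs) hs
  simpa using this



-- the cubic r(u) controlling the sign of h'
noncomputable def rpoly (c u : ℝ) : ℝ :=
  (6*c - 1) - (5*c^2 + 2*c)*u + c^2*(4*c-1)*u^2 - c^4*u^3

lemma c_bounds : 0.36 < 1 - 2/π ∧ 1 - 2/π < 0.37 := by
  have h1 : 3.14 < π := by nlinarith [Real.pi_gt_d2]
  have h2 : π < 3.15 := by nlinarith [Real.pi_lt_d2]
  have hπ : (0:ℝ) < π := by linarith
  constructor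
  · rw [show (0.36:ℝ) = 1 - 0.64 by norm_num]
    have : 2/π < 0.64 := by rw [div_lt_iff₀ hπ]; nlinarith
    linarith
  · rw [show (0.37:ℝ) = 1 - 0.63 by norm_num]
    have : 0.63 < 2/π := by rw [lt_div_iff₀ hπ]; nlinarith
    linarith

lemma rpoly_zero_pos {c : ℝ} (hc1 : 0.36 < c) (hc2 : c < 0.37) : 0 < rpoly c 0 := by
  unfold rpoly; nlinarith

lemma rpoly_one_neg {c : ℝ} (hc1 : 0.36 < c) (hc2 : c < 0.37) : rpoly c 1 < 0 := by
  unfold rpoly; nlinarith [sq_nonneg (c - 0.365), sq_nonneg c]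

-- q identity: (1+cu)^2 (1-u) - (1-cu)^4 = u * rpoly c u
lemma q_ident (c u : ℝ) : (1+c*u)^2 * (1-u) - (1-c*u)^4 = u * rpoly c u := by
  unfold rpoly; ring


lemma rpoly_anti {c u v : ℝ} (hc1 : 0.36 < c) (hc2 : c < 0.37)
    (hu : 0 ≤ u) (huv : u < v) (hv : v ≤ 1) : rpoly c v < rpoly c u := by
  have hv' : 0 < v := lt_of_le_of_lt hu huv
  have hu1 : u < 1 := lt_of_lt_of_le huv hv
  have hb : 0 < (5*c^2 + 2*c) - c^2*(4*c-1)*(u+v) + c^4*(u^2+u*v+v^2) := by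
    have h1 : c^2*(4*c-1)*(u+v) ≤ c^2*(4*c-1)*2 := by
      apply mul_le_mul_of_nonneg_left (by linarith) (by nlinarith)
    nlinarith [pow_pos (show (0:ℝ) < c by linarith) 4, sq_nonneg (u+v), mul_nonneg (mul_nonneg hu hu) hv'.le]
  have := mul_pos (sub_pos.mpr huv) hb
  unfold rpoly; nlinarith


section
variable {c : ℝ}

noncomputable def hfun (c : ℝ) : ℝ → ℝ := fun x => x / (1 - c*x^2) - Real.arcsin x

lemma denom_pos (hc2 : c < 0.37) (hc1 : 0.36 < c) {x : ℝ} (hx : x^2 ≤ 1) : 0 < 1 - c*x^2 := by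
  nlinarith

lemma hfun_hasDeriv (hc1 : 0.36 < c) (hc2 : c < 0.37) {x : ℝ} (hx1 : -1 < x) (hx2 : x < 1) :
    HasDerivAt (hfun c) ((1 + c*x^2)/(1 - c*x^2)^2 - 1/Real.sqrt (1 - x^2)) x := by
  have hx2' : x^2 < 1 := by nlinarith
  have hden : (1 - c*x^2) ≠ 0 := ne_of_gt (denom_pos hc2 hc1 hx2'.le)
  have h1 : HasDerivAt (fun y : ℝ => y / (1 - c*y^2)) ((1 + c*x^2)/(1 - c*x^2)^2) x := by
    have hd : HasDerivAt (fun y : ℝ => 1 - c*y^2) (-(c*(2*x))) x := by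
      have := ((hasDerivAt_pow 2 x).const_mul c)
      have h2 := (hasDerivAt_const x (1:ℝ)).sub this
      exact h2.congr_deriv (by norm_num)
    have := (hasDerivAt_id x).div hd hden
    exact this.congr_deriv (by simp only [id]; ring)
  exact h1.sub (Real.hasDerivAt_arcsin (by linarith) (ne_of_lt hx2))

lemma deriv_sign (hc1 : 0.36 < c) (hc2 : c < 0.37) {x : ℝ} (hx1 : 0 < x) (hx2 : x < 1) :
    (0 < rpoly c (x^2) → 0 < (1 + c*x^2)/(1 - c*x^2)^2 - 1/Real.sqrt (1 - x^2)) ∧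
    (rpoly c (x^2) < 0 → (1 + c*x^2)/(1 - c*x^2)^2 - 1/Real.sqrt (1 - x^2) < 0) := by
  have hx2' : x^2 < 1 := by nlinarith
  have hden : 0 < 1 - c*x^2 := denom_pos hc2 hc1 hx2'.le
  have hy : 0 < Real.sqrt (1 - x^2) := Real.sqrt_pos.mpr (by linarith)
  have hysq : Real.sqrt (1 - x^2) ^ 2 = 1 - x^2 := Real.sq_sqrt (by linarith)
  have hA : 0 < (1 + c*x^2) := by nlinarith
  have hB : 0 < (1 - c*x^2)^2 := pow_pos hden 2
  have hq : ((1+c*x^2)*Real.sqrt (1-x^2))^2 - ((1-c*x^2)^2)^2 = x^2 * rpoly c (x^2) := by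
    have : ((1+c*x^2)*Real.sqrt (1-x^2))^2 = (1+c*x^2)^2 * (1-x^2) := by
      rw [mul_pow, hysq]
    rw [this]
    unfold rpoly; ring
  constructor
  · intro hr
    have h2 : ((1-c*x^2)^2)^2 < ((1+c*x^2)*Real.sqrt (1-x^2))^2 := by
      nlinarith [mul_pos (pow_pos hx1 2) hr]
    have h3 : (1-c*x^2)^2 < (1+c*x^2)*Real.sqrt (1-x^2) :=
      lt_of_pow_lt_pow_left₀ 2 (by positivity) h2
    rw [sub_pos, div_lt_div_iff₀ hy hB]
    linarith [h3]
  · intro hr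
    have h2 : ((1+c*x^2)*Real.sqrt (1-x^2))^2 < ((1-c*x^2)^2)^2 := by
      nlinarith [mul_neg_of_pos_of_neg (pow_pos hx1 2) hr]
    have h3 : (1+c*x^2)*Real.sqrt (1-x^2) < (1-c*x^2)^2 :=
      lt_of_pow_lt_pow_left₀ 2 (by positivity) h2
    rw [sub_neg, div_lt_div_iff₀ hB hy]
    linarith [h3]

lemma hfun_cont (hc1 : 0.36 < c) (hc2 : c < 0.37) : ContinuousOn (hfun c) (Set.Icc 0 1) := by
  apply ContinuousOn.sub
  · apply ContinuousOn.div continuousOn_id (by fun_prop)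
    intro x hx
    simp only [Set.mem_Icc] at hx
    exact ne_of_gt (denom_pos hc2 hc1 (by nlinarith [hx.1, hx.2]))
  · exact Real.continuous_arcsin.continuousOn

lemma hfun_pos (hc1 : 0.36 < c) (hc2 : c < 0.37) (hc_one : 1/(1-c) = π/2)
    {x : ℝ} (hx1 : 0 < x) (hx2 : x < 1) : 0 < hfun c x := by
  -- root of rpoly
  obtain ⟨u₀, hu₀mem, hu₀⟩ : ∃ u₀ ∈ Set.Ioo (0:ℝ) 1, rpoly c u₀ = 0 := by
    have hcont : ContinuousOn (rpoly c) (Set.Icc 0 1) := by unfold rpoly; fun_prop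
    have := intermediate_value_Ioo' (by norm_num : (0:ℝ) ≤ 1) hcont
      (Set.mem_Ioo.mpr ⟨rpoly_one_neg hc1 hc2, rpoly_zero_pos hc1 hc2⟩)
    obtain ⟨u₀, h1, h2⟩ := this
    exact ⟨u₀, h1, h2⟩
  set x₀ := Real.sqrt u₀ with hx₀def
  have hu₀pos : 0 < u₀ := hu₀mem.1
  have hu₀lt : u₀ < 1 := hu₀mem.2
  have hx₀pos : 0 < x₀ := Real.sqrt_pos.mpr hu₀pos
  have hx₀sq : x₀^2 = u₀ := Real.sq_sqrt hu₀pos.le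
  have hx₀lt : x₀ < 1 := by
    nlinarith [hx₀sq, hx₀pos]
  -- monotone on [0, x₀]
  have hmono : StrictMonoOn (hfun c) (Set.Icc 0 x₀) := by
    apply strictMonoOn_of_deriv_pos (convex_Icc 0 x₀)
      ((hfun_cont hc1 hc2).mono (Set.Icc_subset_Icc le_rfl hx₀lt.le))
    intro y hy
    rw [interior_Icc, Set.mem_Ioo] at hy
    have hy1 : -1 < y := by linarith [hy.1]
    have hy2 : y < 1 := lt_trans hy.2 hx₀lt
    rw [(hfun_hasDeriv hc1 hc2 hy1 hy2).deriv]
    apply (deriv_sign hc1 hc2 hy.1 hy2).1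
    have : y^2 < u₀ := by nlinarith [hy.1, hy.2, hx₀sq]
    have := rpoly_anti hc1 hc2 (sq_nonneg y) this hu₀lt.le
    rw [hu₀] at this; linarith
  have hanti : StrictAntiOn (hfun c) (Set.Icc x₀ 1) := by
    apply strictAntiOn_of_deriv_neg (convex_Icc x₀ 1)
      ((hfun_cont hc1 hc2).mono (Set.Icc_subset_Icc hx₀pos.le le_rfl))
    intro y hy
    rw [interior_Icc, Set.mem_Ioo] at hy
    have hy0 : 0 < y := lt_trans hx₀pos hy.1
    have hy1 : -1 < y := by linarith
    rw [(hfun_hasDeriv hc1 hc2 hy1 hy.2).deriv]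
    apply (deriv_sign hc1 hc2 hy0 hy.2).2
    have : u₀ < y^2 := by nlinarith [hy.1, hy.2, hx₀sq, hx₀pos]
    have := rpoly_anti hc1 hc2 hu₀pos.le this (by nlinarith [hy.2, hy0])
    rw [hu₀] at this; linarith
  have h0 : hfun c 0 = 0 := by unfold hfun; simp
  have h1 : hfun c 1 = 0 := by
    unfold hfun
    rw [Real.arcsin_one, show (1:ℝ) - c*1^2 = 1 - c by ring, hc_one]
    ring
  rcases le_or_gt x x₀ with h | h
  · have := hmono (Set.mem_Icc.mpr ⟨le_rfl, hx₀pos.le⟩) (Set.mem_Icc.mpr ⟨hx1.le, h⟩) hx1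
    rw [h0] at this; exact this
  · have := hanti (Set.mem_Icc.mpr ⟨h.le, hx2.le⟩) (Set.mem_Icc.mpr ⟨hx₀lt.le, le_rfl⟩) hx2
    rw [h1] at this; exact this
end


lemma key_right (s : ℝ) (h0 : 0 < s) (h1 : s < π/2) :
    Real.sin s + s/6 * Real.sin s ^ 2 < s := by
  have hq := sin_le_quintic s h0.le
  have hs1 : Real.sin s ≤ s := (Real.sin_le h0.le)
  have hsin_pos : 0 < Real.sin s := Real.sin_pos_of_pos_of_lt_pi h0 (by nlinarith [Real.pi_pos])
  have hP : Real.sin s ^ 2 ≤ (s - s^3/6 + s^5/120)^2 := by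
    apply sq_le_sq' <;> nlinarith
  have hπ : π < 3.15 := by nlinarith [Real.pi_lt_d2]
  have hs2 : s < 1.6 := by nlinarith
  have hu : s^2 < 2.56 := by nlinarith
  have h7 : s^7 ≤ 2.56 * s^5 := by nlinarith [pow_pos h0 5, pow_pos h0 7]
  have h11 : s^11 ≤ 2.56^3 * s^5 := by nlinarith [pow_pos h0 5, pow_pos h0 7, pow_pos h0 9, pow_pos h0 11]
  have hkey : (s - s^3/6 + s^5/120) + s/6 * (s - s^3/6 + s^5/120)^2 < s := by
    nlinarith [pow_pos h0 5, pow_pos h0 9]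
  nlinarith


lemma key_left (s : ℝ) (h0 : 0 < s) (h1 : s < π/2) :
    s < Real.sin s + (1 - 2/π) * s * Real.sin s ^ 2 := by
  have hπ := Real.pi_pos
  have hc1 := c_bounds.1
  have hc2 := c_bounds.2
  have hc_one : 1/(1-(1 - 2/π)) = π/2 := by
    rw [show 1 - (1 - 2/π) = 2/π by ring, one_div_div]
  set x := Real.sin s with hxdef
  have hx1 : 0 < x := Real.sin_pos_of_pos_of_lt_pi h0 (by nlinarith)
  have hx2 : x < 1 := by
    have := Real.sin_lt_sin_of_lt_of_le_pi_div_two (by linarith : -(π/2) ≤ s) le_rfl h1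
    rwa [Real.sin_pi_div_two] at this
  have hh := hfun_pos hc1 hc2 hc_one hx1 hx2
  unfold hfun at hh
  have hxsq : x^2 < 1 := by nlinarith
  have hden : 0 < 1 - (1 - 2/π)*x^2 := by
    nlinarith [mul_le_mul_of_nonneg_right hc2.le (sq_nonneg x), hxsq, sq_nonneg x]
  have harc : Real.arcsin x = s := Real.arcsin_sin (by linarith) (by linarith)
  rw [harc] at hh
  have hlt : s < x / (1 - (1 - 2/π)*x^2) := by linarith
  rw [lt_div_iff₀ hden] at hlt
  nlinarith [hlt]

lemma norm_left (t : ℝ) (h0 : 0 < t) (h1 : t < 1) :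
    1 - (1 - 2/π) * t^2 < t / Real.arcsin t := by
  have hs0 : 0 < Real.arcsin t := Real.arcsin_pos.mpr h0
  have hs1 : Real.arcsin t < π/2 := (Real.arcsin_lt_pi_div_two).mpr h1
  have := key_left (Real.arcsin t) hs0 hs1
  rw [Real.sin_arcsin (by linarith) h1.le] at this
  rw [lt_div_iff₀ hs0]
  nlinarith

lemma norm_right (t : ℝ) (h0 : 0 < t) (h1 : t < 1) :
    t / Real.arcsin t < 1 - t^2/6 := by
  have hs0 : 0 < Real.arcsin t := Real.arcsin_pos.mpr h0
  have hs1 : Real.arcsin t < π/2 := (Real.arcsin_lt_pi_div_two).mpr h1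
  have := key_right (Real.arcsin t) hs0 hs1
  rw [Real.sin_arcsin (by linarith) h1.le] at this
  rw [div_lt_iff₀ hs0]
  nlinarith

-- mean reductions for b < a
lemma means_eq {a b : ℝ} (hb : 0 < b) (hab : b < a) :
    0 < (a-b)/(a+b) ∧ (a-b)/(a+b) < 1 ∧
    Hmean a b = Amean a b * (1 - ((a-b)/(a+b))^2) ∧
    Pmean a b = Amean a b * (((a-b)/(a+b)) / Real.arcsin ((a-b)/(a+b))) := by
  have hab' : 0 < a + b := by linarith
  have ht0 : 0 < (a-b)/(a+b) := div_pos (by linarith) hab'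
  have ht1 : (a-b)/(a+b) < 1 := by rw [div_lt_one hab']; linarith
  refine ⟨ht0, ht1, ?_, ?_⟩
  · unfold Hmean Amean; field_simp; ring
  · unfold Pmean Amean
    have hs0 : 0 < Real.arcsin ((a-b)/(a+b)) := Real.arcsin_pos.mpr ht0
    field_simp


lemma Amean_comm (a b : ℝ) : Amean a b = Amean b a := by unfold Amean; ring
lemma Hmean_comm (a b : ℝ) : Hmean a b = Hmean b a := by unfold Hmean; rw [add_comm b a]; ring_nf
lemma Pmean_comm (a b : ℝ) : Pmean a b = Pmean b a := by
  unfold Pmean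
  rw [show (b-a)/(b+a) = -((a-b)/(a+b)) by rw [add_comm b a]; ring, Real.arcsin_neg]
  rw [show (2:ℝ) * -Real.arcsin ((a-b)/(a+b)) = -(2*Real.arcsin ((a-b)/(a+b))) by ring]
  rw [div_neg, show b - a = -(a-b) by ring, neg_div, neg_neg]

lemma main_both {a b : ℝ} (ha : 0 < a) (hb : 0 < b) (hab : a ≠ b) :
    (2 / π) * Amean a b + (1 - (2 / π)) * Hmean a b < Pmean a b ∧
    Pmean a b < (5 / 6) * Amean a b + (1 - (5 / 6)) * Hmean a b := by
  have key : ∀ x y : ℝ, 0 < y → y < x →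
      (2 / π) * Amean x y + (1 - (2 / π)) * Hmean x y < Pmean x y ∧
      Pmean x y < (5 / 6) * Amean x y + (1 - (5 / 6)) * Hmean x y := by
    intro x y hy hyx
    obtain ⟨ht0, ht1, hH, hP⟩ := means_eq hy hyx
    set t := (x-y)/(x+y)
    have hA : 0 < Amean x y := by unfold Amean; linarith
    have h1 := norm_left t ht0 ht1
    have h2 := norm_right t ht0 ht1
    constructor
    · rw [hH, hP]
      calc (2/π) * Amean x y + (1 - 2/π) * (Amean x y * (1 - t^2))
          = Amean x y * (1 - (1 - 2/π) * t^2) := by ring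
        _ < Amean x y * (t / Real.arcsin t) := by
            exact (mul_lt_mul_iff_right₀ hA).mpr h1
    · rw [hH, hP]
      calc Amean x y * (t / Real.arcsin t) < Amean x y * (1 - t^2/6) :=
            (mul_lt_mul_iff_right₀ hA).mpr h2
        _ = (5/6) * Amean x y + (1 - 5/6) * (Amean x y * (1 - t^2)) := by ring
  rcases lt_or_gt_of_ne hab with h | h
  · rw [Amean_comm, Hmean_comm, Pmean_comm]; exact key b a ha h
  · exact key a b hb h

lemma AH_lt {a b : ℝ} (ha : 0 < a) (hb : 0 < b) (hab : a ≠ b) : Hmean a b < Amean a b := by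
  unfold Hmean Amean
  rw [div_lt_div_iff₀ (by linarith) (by norm_num)]
  nlinarith [sq_pos_of_ne_zero (sub_ne_zero.mpr hab)]

-- means at a = 1+t, b = 1-t
lemma means_special {t : ℝ} (h0 : 0 < t) (h1 : t < 1) :
    Amean (1+t) (1-t) = 1 ∧ Hmean (1+t) (1-t) = 1 - t^2 ∧
    Pmean (1+t) (1-t) = t / Real.arcsin t := by
  refine ⟨by unfold Amean; ring, by unfold Hmean; field_simp; ring, ?_⟩
  unfold Pmean
  rw [show ((1+t)-(1-t))/((1+t)+(1-t)) = t by field_simp; ring]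
  rw [show ((1+t)-(1-t)) = 2*t by ring]
  rw [mul_div_mul_left t (Real.arcsin t) (by norm_num)]


lemma sin_mem {s : ℝ} (h0 : 0 < s) (h1 : s < π/2) : 0 < Real.sin s ∧ Real.sin s < 1 := by
  have hπ := Real.pi_pos
  refine ⟨Real.sin_pos_of_pos_of_lt_pi h0 (by nlinarith), ?_⟩
  have := Real.sin_lt_sin_of_lt_of_le_pi_div_two (by linarith : -(π/2) ≤ s) le_rfl h1
  rwa [Real.sin_pi_div_two] at this

lemma sharp_alpha (α : ℝ) (hyp : ∀ a b : ℝ, 0 < a → 0 < b → a ≠ b →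
        α * Amean a b + (1 - α) * Hmean a b < Pmean a b) : α ≤ 2/π := by
  by_contra hα
  push_neg at hα
  have hπ := Real.pi_pos
  have hπ2 : 1 < π/2 := by nlinarith [Real.pi_gt_three]
  set ψ : ℝ → ℝ := fun s => α + (1-α)*(1 - Real.sin s^2) - Real.sin s / s with hψdef
  have hcont : ContinuousAt ψ (π/2) := by
    apply ContinuousAt.sub (by fun_prop)
    exact ContinuousAt.div (Real.continuous_sin.continuousAt) continuousAt_id (by positivity)
  have hval : 0 < ψ (π/2) := by
    show 0 < α + (1-α)*(1 - Real.sin (π/2)^2) - Real.sin (π/2) / (π/2)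
    rw [Real.sin_pi_div_two, one_div_div]
    norm_num
    linarith
  have hev1 : ∀ᶠ s in 𝓝[<] (π/2), 0 < ψ s :=
    eventually_nhdsWithin_of_eventually_nhds (hcont.tendsto.eventually (eventually_gt_nhds hval))
  have hev2 : ∀ᶠ s in 𝓝[<] (π/2), 1 < s :=
    eventually_nhdsWithin_of_eventually_nhds (eventually_gt_nhds hπ2)
  have hev3 : ∀ᶠ s in 𝓝[<] (π/2), s < π/2 := eventually_mem_nhdsWithin
  obtain ⟨s, ⟨⟨hψs, hs1⟩, hs2⟩⟩ := ((hev1.and hev2).and hev3).exists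
  have hs0 : 0 < s := by linarith
  simp only [hψdef] at hψs
  obtain ⟨ht0, ht1⟩ := sin_mem hs0 hs2
  set t := Real.sin s with htdef
  have harc : Real.arcsin t = s := by
    rw [htdef]; exact Real.arcsin_sin (by linarith) (by linarith)
  clear_value t
  obtain ⟨hA, hH, hP⟩ := means_special ht0 ht1
  have := hyp (1+t) (1-t) (by linarith) (by linarith) (by intro h; linarith)
  rw [hA, hH, hP, harc] at this
  nlinarith [hψs, this]

set_option maxHeartbeats 1000000 in
lemma sharp_beta (β : ℝ) (hyp : ∀ a b : ℝ, 0 < a → 0 < b → a ≠ b →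
        Pmean a b < β * Amean a b + (1 - β) * Hmean a b) : β ≥ 5/6 := by
  by_contra hβ
  push_neg at hβ
  have hδ : 1/6 < 1 - β := by linarith
  have hδ0 : 0 < 1 - β := by linarith
  have hk1 : 1/(6*(1-β)) < 1 := by rw [div_lt_one (by linarith)]; linarith
  have hk0 : 0 < 1/(6*(1-β)) := by positivity
  have hε : 0 < 3*(1 - 1/(6*(1-β))) := by linarith
  obtain ⟨s, hs0, hs12, hssq⟩ : ∃ s : ℝ, 0 < s ∧ s ≤ 1/2 ∧ s^2 ≤ 3*(1 - 1/(6*(1-β))) := by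
    refine ⟨min 1 (Real.sqrt (3*(1 - 1/(6*(1-β))))) / 2, ?_, ?_, ?_⟩
    · have := Real.sqrt_pos.mpr hε
      positivity
    · have : min 1 (Real.sqrt (3*(1 - 1/(6*(1-β))))) ≤ 1 := min_le_left _ _
      linarith
    · have h1 : min 1 (Real.sqrt (3*(1 - 1/(6*(1-β))))) / 2 ≤ Real.sqrt (3*(1 - 1/(6*(1-β)))) := by
        have h2 : (0:ℝ) ≤ min 1 (Real.sqrt (3*(1 - 1/(6*(1-β))))) :=
          le_min (by norm_num) (Real.sqrt_nonneg _)
        have h3 := min_le_right 1 (Real.sqrt (3*(1 - 1/(6*(1-β)))))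
        linarith
      calc (min 1 (Real.sqrt (3*(1 - 1/(6*(1-β))))) / 2)^2
          ≤ (Real.sqrt (3*(1 - 1/(6*(1-β)))))^2 := by
            apply pow_le_pow_left₀ (by positivity) h1
        _ = 3*(1 - 1/(6*(1-β))) := Real.sq_sqrt hε.le
  have hπ := Real.pi_pos
  have hs2 : s < π/2 := by nlinarith [Real.pi_gt_three]
  obtain ⟨ht0, ht1⟩ := sin_mem hs0 hs2
  have harc : Real.arcsin (Real.sin s) = s := Real.arcsin_sin (by linarith) (by linarith)
  have hcub : s - s^3/6 ≤ Real.sin s := sin_ge_cubic s hs0.le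
  obtain ⟨t, ht0, ht1, harc, hcub⟩ : ∃ t : ℝ, 0 < t ∧ t < 1 ∧ Real.arcsin t = s ∧ s - s^3/6 ≤ t :=
    ⟨Real.sin s, ht0, ht1, harc, hcub⟩
  -- key estimate : t ≥ s - (1-β) * s * t^2
  have hfac : 0 ≤ s*(1 - s^2/6) := by nlinarith
  have hsq : (s*(1 - s^2/6))^2 ≤ t^2 := by
    apply pow_le_pow_left₀ hfac (by nlinarith) 2
  have ht2 : s^2 * (1/(6*(1-β))) ≤ t^2 := by
    have h5 : 1 - s^2/3 ≤ (1 - s^2/6)^2 := by nlinarith [sq_nonneg s]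
    have h6 : 1/(6*(1-β)) ≤ 1 - s^2/3 := by linarith
    calc s^2 * (1/(6*(1-β))) ≤ s^2 * (1 - s^2/3) := by nlinarith [sq_nonneg s]
      _ ≤ s^2 * (1 - s^2/6)^2 := by nlinarith [sq_nonneg s]
      _ = (s*(1 - s^2/6))^2 := by ring
      _ ≤ t^2 := hsq
  have hδk : (1-β) * (1/(6*(1-β))) = 1/6 := by field_simp
  have hkey : s - (1-β) * s * t^2 ≤ t := by
    have h7 : (1-β)*s*(s^2 * (1/(6*(1-β)))) ≤ (1-β)*s*t^2 :=
      mul_le_mul_of_nonneg_left ht2 (mul_nonneg hδ0.le hs0.le)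
    have h8 : (1-β)*s*(s^2 * (1/(6*(1-β)))) = s^3 * ((1-β) * (1/(6*(1-β)))) := by ring
    rw [h8, hδk] at h7
    linarith
  obtain ⟨hA, hH, hP⟩ := means_special ht0 ht1
  have := hyp (1+t) (1-t) (by linarith) (by linarith) (by intro h; linarith)
  rw [hA, hH, hP, harc] at this
  rw [div_lt_iff₀ (by linarith : (0:ℝ) < s)] at this
  nlinarith [this]


theorem sharp_stmt_11 :
    (∀ a b : ℝ, 0 < a → 0 < b → a ≠ b →
        (2 / Real.pi) * Amean a b + (1 - (2 / Real.pi)) * Hmean a b < Pmean a b ∧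
        Pmean a b < (5 / 6) * Amean a b + (1 - (5 / 6)) * Hmean a b) ∧
    (∀ α : ℝ, (∀ a b : ℝ, 0 < a → 0 < b → a ≠ b →
        α * Amean a b + (1 - α) * Hmean a b < Pmean a b) ↔ α ≤ (2 / Real.pi)) ∧
    (∀ β : ℝ, (∀ a b : ℝ, 0 < a → 0 < b → a ≠ b →
        Pmean a b < β * Amean a b + (1 - β) * Hmean a b) ↔ β ≥ (5 / 6)) := by
  refine ⟨fun a b ha hb hab => main_both ha hb hab, fun α => ⟨sharp_alpha α, ?_⟩,
    fun β => ⟨sharp_beta β, ?_⟩⟩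
  · intro hα a b ha hb hab
    have hm := (main_both ha hb hab).1
    have hAH := AH_lt ha hb hab
    nlinarith [mul_le_mul_of_nonneg_right hα (by linarith : (0:ℝ) ≤ Amean a b - Hmean a b)]
  · intro hβ a b ha hb hab
    have hm := (main_both ha hb hab).2
    have hAH := AH_lt ha hb hab
    nlinarith [mul_le_mul_of_nonneg_right hβ (by linarith : (0:ℝ) ≤ Amean a b - Hmean a b)]
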